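/- For every bipartite state ρ on ℂ^m ⊗ ℂ^n, the two-sided negativity of quantumness equals the minimal l1-distance (in the optimal product basis) from the classical-classical states: Q_N^{AB}(ρ) = inf over m×m unitaries U, n×n unitaries V, and diagonal states D indexed by Fin m × Fin n (nonnegative diagonal entries summing to 1, zero off-diagonal entries) of (1/2)‖(U ⊗ V)† ρ (U ⊗ V) − D‖_{l1}. -/

import Mathlib

open scoped Kronecker ComplexOrder
open Matrix

noncomputable def traceNorm {ι : Type*} [Fintype ι] [DecidableEq ι] (A : Matrix ι ι ℂ) : ℝ :=
  ((((Matrix.posSemidef_conjTranspose_mul_self A).1.eigenvectorUnitary : Matrix ι ι ℂ) *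
    Matrix.diagonal (((↑) : ℝ → ℂ) ∘ (√·) ∘ (Matrix.posSemidef_conjTranspose_mul_self A).1.eigenvalues) *
    (star (Matrix.posSemidef_conjTranspose_mul_self A).1.eigenvectorUnitary :
      Matrix ι ι ℂ)).trace).re

noncomputable def l1Norm {ι κ : Type*} [Fintype ι] [Fintype κ] (A : Matrix ι κ ℂ) : ℝ :=
  ∑ i, ∑ j, ‖A i j‖

def ptranspose {α β : Type*} (ρ : Matrix (α × β) (α × β) ℂ) : Matrix (α × β) (α × β) ℂ :=
  Matrix.of fun p q => ρ (p.1, q.2) (q.1, p.2)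

noncomputable def negativity {α β : Type*} [Fintype α] [Fintype β] [DecidableEq α] [DecidableEq β]
    (ρ : Matrix (α × β) (α × β) ℂ) : ℝ :=
  (traceNorm (ptranspose ρ) - 1) / 2

def matUnit {ι : Type*} [DecidableEq ι] (i j : ι) : Matrix ι ι ℂ :=
  Matrix.single i j 1

noncomputable def mcs {n : ℕ} (t : Fin n → Fin n → ℂ) :
    Matrix (Fin n × Fin n) (Fin n × Fin n) ℂ :=
  ∑ i, ∑ j, t i j • (matUnit i j ⊗ₖ matUnit i j)

def blockOf {m n : ℕ} (ρ : Matrix (Fin m × Fin n) (Fin m × Fin n) ℂ) (i j : Fin m) :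
    Matrix (Fin n) (Fin n) ℂ :=
  Matrix.of fun k l => ρ (i, k) (j, l)

noncomputable def conjU {m n : ℕ} (U : Matrix.unitaryGroup (Fin m) ℂ)
    (ρ : Matrix (Fin m × Fin n) (Fin m × Fin n) ℂ) : Matrix (Fin m × Fin n) (Fin m × Fin n) ℂ :=
  ((U : Matrix (Fin m) (Fin m) ℂ) ⊗ₖ (1 : Matrix (Fin n) (Fin n) ℂ))ᴴ * ρ *
    ((U : Matrix (Fin m) (Fin m) ℂ) ⊗ₖ (1 : Matrix (Fin n) (Fin n) ℂ))

noncomputable def conjUV {m n : ℕ} (U : Matrix.unitaryGroup (Fin m) ℂ)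
    (V : Matrix.unitaryGroup (Fin n) ℂ)
    (ρ : Matrix (Fin m × Fin n) (Fin m × Fin n) ℂ) : Matrix (Fin m × Fin n) (Fin m × Fin n) ℂ :=
  ((U : Matrix (Fin m) (Fin m) ℂ) ⊗ₖ (V : Matrix (Fin n) (Fin n) ℂ))ᴴ * ρ *
    ((U : Matrix (Fin m) (Fin m) ℂ) ⊗ₖ (V : Matrix (Fin n) (Fin n) ℂ))

noncomputable def QNA {m n : ℕ} (ρ : Matrix (Fin m × Fin n) (Fin m × Fin n) ℂ) : ℝ :=
  ⨅ U : Matrix.unitaryGroup (Fin m) ℂ,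
    ((∑ i, ∑ j, traceNorm (blockOf (conjU U ρ) i j)) - 1) / 2

noncomputable def QNAB {m n : ℕ} (ρ : Matrix (Fin m × Fin n) (Fin m × Fin n) ℂ) : ℝ :=
  ⨅ U : Matrix.unitaryGroup (Fin m) ℂ, ⨅ V : Matrix.unitaryGroup (Fin n) ℂ,
    (l1Norm (conjUV U V ρ) - 1) / 2

lemma kron_conjTranspose {m n : ℕ} (A : Matrix (Fin m) (Fin m) ℂ) (B : Matrix (Fin n) (Fin n) ℂ) :
    (A ⊗ₖ B)ᴴ = Aᴴ ⊗ₖ Bᴴ := by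
  ext p q
  simp [conjTranspose_apply, kroneckerMap_apply, _root_.map_mul, mul_comm]

lemma kron_mul_conjT {m n : ℕ} (U : Matrix.unitaryGroup (Fin m) ℂ)
    (V : Matrix.unitaryGroup (Fin n) ℂ) :
    ((U : Matrix (Fin m) (Fin m) ℂ) ⊗ₖ (V : Matrix (Fin n) (Fin n) ℂ)) *
      ((U : Matrix (Fin m) (Fin m) ℂ) ⊗ₖ (V : Matrix (Fin n) (Fin n) ℂ))ᴴ = 1 := by
  rw [kron_conjTranspose, ← Matrix.mul_kronecker_mul]
  have hU : (U : Matrix (Fin m) (Fin m) ℂ) * (U : Matrix (Fin m) (Fin m) ℂ)ᴴ = 1 := by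
    simpa [Matrix.star_eq_conjTranspose] using U.2.2
  have hV : (V : Matrix (Fin n) (Fin n) ℂ) * (V : Matrix (Fin n) (Fin n) ℂ)ᴴ = 1 := by
    simpa [Matrix.star_eq_conjTranspose] using V.2.2
  rw [hU, hV, Matrix.one_kronecker_one]

lemma psd_diag {ι : Type*} [Fintype ι] [DecidableEq ι] {σ : Matrix ι ι ℂ} (h : σ.PosSemidef)
    (p : ι) : 0 ≤ (σ p p).re ∧ (σ p p).im = 0 := by
  have h2 := h.dotProduct_mulVec_nonneg (Pi.single p 1)
  have : star (Pi.single p 1 : ι → ℂ) ⬝ᵥ σ *ᵥ Pi.single p 1 = σ p p := by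
    simp [Matrix.mulVec_single, single_dotProduct]
  rw [this, Complex.nonneg_iff] at h2
  exact ⟨h2.1, h2.2.symm⟩

lemma conjUV_psd {m n : ℕ} (U : Matrix.unitaryGroup (Fin m) ℂ)
    (V : Matrix.unitaryGroup (Fin n) ℂ) {ρ : Matrix (Fin m × Fin n) (Fin m × Fin n) ℂ}
    (hpos : ρ.PosSemidef) : (conjUV U V ρ).PosSemidef :=
  hpos.conjTranspose_mul_mul_same _

lemma conjUV_trace {m n : ℕ} (U : Matrix.unitaryGroup (Fin m) ℂ)
    (V : Matrix.unitaryGroup (Fin n) ℂ) {ρ : Matrix (Fin m × Fin n) (Fin m × Fin n) ℂ}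
    (htr : ρ.trace = 1) : (conjUV U V ρ).trace = 1 := by
  unfold conjUV
  rw [Matrix.trace_mul_cycle, kron_mul_conjT, Matrix.one_mul, htr]

lemma l1Norm_nonneg {ι κ : Type*} [Fintype ι] [Fintype κ] (A : Matrix ι κ ℂ) : 0 ≤ l1Norm A := by
  unfold l1Norm
  positivity

/-- Lower bound. -/
lemma lemA {ι : Type*} [Fintype ι] [DecidableEq ι] (σ : Matrix ι ι ℂ) (d : ι → ℝ)
    (hd0 : ∀ p, 0 ≤ d p) (hd1 : ∑ p, d p = 1) :
    l1Norm σ ≤ l1Norm (σ - Matrix.diagonal (fun p => (d p : ℂ))) + 1 := by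
  have key : ∀ p q : ι, ‖σ p q‖ ≤
      ‖(σ - Matrix.diagonal (fun p => (d p : ℂ))) p q‖ +
        ‖(Matrix.diagonal (fun p => (d p : ℂ))) p q‖ := by
    intro p q
    have := norm_sub_le (σ p q) ((Matrix.diagonal fun p => (d p : ℂ)) p q)
    calc ‖σ p q‖
        = ‖(σ p q - (Matrix.diagonal fun p => (d p : ℂ)) p q) +
            (Matrix.diagonal fun p => (d p : ℂ)) p q‖ := by ring_nf
      _ ≤ _ := by
          simpa [Matrix.sub_apply] using norm_add_le
            (σ p q - (Matrix.diagonal fun p => (d p : ℂ)) p q)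
            ((Matrix.diagonal fun p => (d p : ℂ)) p q)
  have hdiagsum : ∑ p : ι, ∑ q : ι,
      ‖(Matrix.diagonal (fun p => (d p : ℂ))) p q‖ = 1 := by
    rw [← hd1]
    refine Finset.sum_congr rfl fun p _ => ?_
    rw [Finset.sum_eq_single p]
    · simp [Matrix.diagonal_apply_eq, Complex.norm_real, abs_of_nonneg (hd0 p)]
    · intro q _ hq
      simp [Matrix.diagonal_apply_ne' _ hq]
    · simp
  calc l1Norm σ ≤ ∑ p, ∑ q, (‖(σ - Matrix.diagonal (fun p => (d p : ℂ))) p q‖ +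
        ‖(Matrix.diagonal (fun p => (d p : ℂ))) p q‖) := by
        refine Finset.sum_le_sum fun p _ => Finset.sum_le_sum fun q _ => key p q
    _ = l1Norm (σ - Matrix.diagonal (fun p => (d p : ℂ))) + 1 := by
        simp only [Finset.sum_add_distrib]
        rw [hdiagsum]; rfl

/-- Exact value with the canonical diagonal. -/
lemma lemB {ι : Type*} [Fintype ι] [DecidableEq ι] {σ : Matrix ι ι ℂ} (hσ : σ.PosSemidef)
    (htr : σ.trace = 1) :
    l1Norm (σ - Matrix.diagonal (fun p => ((σ p p).re : ℂ))) = l1Norm σ - 1 := by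
  have hdiag : ∀ p, σ p p = ((σ p p).re : ℂ) := fun p =>
    Complex.ext rfl (by simpa using (psd_diag hσ p).2)
  have htr' : ∑ p, (σ p p).re = 1 := by
    have : (σ.trace).re = 1 := by rw [htr]; simp
    rw [← this, Matrix.trace]
    simp [Matrix.diag_apply, Complex.re_sum]
  have key : ∀ p q : ι, ‖(σ - Matrix.diagonal (fun p => ((σ p p).re : ℂ))) p q‖
      = ‖σ p q‖ - (if p = q then (σ p p).re else 0) := by
    intro p q
    rcases eq_or_ne p q with rfl | hpq
    · simp only [Matrix.sub_apply, Matrix.diagonal_apply_eq, if_pos rfl]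
      rw [← hdiag p, sub_self, norm_zero]
      rw [hdiag p]
      simp [Complex.norm_real, abs_of_nonneg (psd_diag hσ p).1]
    · simp [Matrix.sub_apply, Matrix.diagonal_apply_ne _ hpq, hpq]
  unfold l1Norm
  simp only [key, Finset.sum_sub_distrib]
  congr 1
  rw [← htr']
  refine Finset.sum_congr rfl fun p _ => ?_
  simp

/-- the two-sided negativity of quantumness equals the minimal l1-distance
(in the optimal product basis) from the classical-classical (diagonal) states. -/
theorem stmt_9 {m n : ℕ} (ρ : Matrix (Fin m × Fin n) (Fin m × Fin n) ℂ)
    (hpos : ρ.PosSemidef) (htr : ρ.trace = 1) :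
    QNAB ρ = sInf { r : ℝ | ∃ (U : Matrix.unitaryGroup (Fin m) ℂ)
        (V : Matrix.unitaryGroup (Fin n) ℂ) (d : Fin m × Fin n → ℝ),
        (∀ p, 0 ≤ d p) ∧ (∑ p, d p = 1) ∧
        r = (1/2) * l1Norm (conjUV U V ρ - Matrix.diagonal (fun p => (d p : ℂ))) } := by
  set S := { r : ℝ | ∃ (U : Matrix.unitaryGroup (Fin m) ℂ)
        (V : Matrix.unitaryGroup (Fin n) ℂ) (d : Fin m × Fin n → ℝ),
        (∀ p, 0 ≤ d p) ∧ (∑ p, d p = 1) ∧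
        r = (1/2) * l1Norm (conjUV U V ρ - Matrix.diagonal (fun p => (d p : ℂ))) } with hS
  -- a canonical element for each (U, V)
  have hmem : ∀ (U : Matrix.unitaryGroup (Fin m) ℂ) (V : Matrix.unitaryGroup (Fin n) ℂ),
      (l1Norm (conjUV U V ρ) - 1) / 2 ∈ S := by
    intro U V
    refine ⟨U, V, fun p => ((conjUV U V ρ) p p).re, fun p => (psd_diag (conjUV_psd U V hpos) p).1,
      ?_, ?_⟩
    · have : ((conjUV U V ρ).trace).re = 1 := by rw [conjUV_trace U V htr]; simp
      rw [← this, Matrix.trace]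
      simp [Matrix.diag_apply, Complex.re_sum]
    · rw [lemB (conjUV_psd U V hpos) (conjUV_trace U V htr)]
      ring
  have hSne : S.Nonempty := ⟨_, hmem 1 1⟩
  have hbdd : BddBelow S := by
    refine ⟨0, fun r hr => ?_⟩
    obtain ⟨U, V, d, _, _, rfl⟩ := hr
    have := l1Norm_nonneg (conjUV U V ρ - Matrix.diagonal (fun p => (d p : ℂ)))
    linarith
  have hbddV : ∀ U : Matrix.unitaryGroup (Fin m) ℂ,
      BddBelow (Set.range fun V : Matrix.unitaryGroup (Fin n) ℂ =>
        (l1Norm (conjUV U V ρ) - 1) / 2) := by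
    intro U
    refine ⟨-(1/2), fun x hx => ?_⟩
    obtain ⟨V, rfl⟩ := hx
    have := l1Norm_nonneg (conjUV U V ρ)
    linarith
  apply le_antisymm
  · refine le_csInf hSne fun r hr => ?_
    obtain ⟨U, V, d, hd0, hd1, rfl⟩ := hr
    have h1 : QNAB ρ ≤ (l1Norm (conjUV U V ρ) - 1) / 2 := by
      refine le_trans (ciInf_le ?_ U) (ciInf_le (hbddV U) V)
      refine ⟨-(1/2), fun x hx => ?_⟩
      obtain ⟨U', rfl⟩ := hx
      refine le_ciInf fun V' => ?_
      have := l1Norm_nonneg (conjUV U' V' ρ)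
      linarith
    refine h1.trans ?_
    have := lemA (conjUV U V ρ) d hd0 hd1
    linarith
  · refine le_ciInf fun U => le_ciInf fun V => ?_
    exact csInf_le hbdd (hmem U V)
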